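/- Let r ≥ 4 and let w, x, y, z be four distinct elements of [r]. Define V ∈ ℝ^(𝒫([r])) by V_T = (1_T(w) − 1_T(x)) · (1_T(y) − 1_T(z)), where 1_T(v) = 1 if v ∈ T and 0 otherwise. Then V is an eigenvector of M_r with eigenvalue 2^(r−3). -/

import Mathlib

/-- The matrix `M_r`, indexed by subsets `S, T ⊆ [r]`, with entry
`C(|S ∩ T|, 2) + C(|Sᶜ ∩ Tᶜ|, 2)`. -/
def Mmat (r : ℕ) : Matrix (Finset (Fin r)) (Finset (Fin r)) ℝ :=
  fun S T => ((S ∩ T).card.choose 2 : ℝ) + ((Sᶜ ∩ Tᶜ).card.choose 2 : ℝ)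

open Finset
open scoped symmDiff

/-- indicator of membership -/
def chi {r : ℕ} (v : Fin r) (T : Finset (Fin r)) : ℝ := if v ∈ T then 1 else 0

lemma ite_eq_chi {r : ℕ} (v : Fin r) (T : Finset (Fin r)) :
    (if v ∈ T then (1 : ℝ) else 0) = chi v T := rfl

lemma chi_mul_self {r : ℕ} (v : Fin r) (T : Finset (Fin r)) :
    chi v T * chi v T = chi v T := by
  unfold chi; split_ifs <;> ring

/-- master product lemma -/
lemma sum_prod_ite {r : ℕ} (f g : Fin r → ℝ) :
    ∑ T : Finset (Fin r), ∏ i, (if i ∈ T then f i else g i) = ∏ i, (f i + g i) := by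
  rw [Finset.prod_add, ← Finset.powerset_univ]
  refine Finset.sum_congr rfl fun T hT => ?_
  rw [Finset.prod_ite]
  congr 1
  · congr 1; ext i; simp
  · congr 1; ext i; simp

lemma choose2 (n : ℕ) : ((n.choose 2 : ℕ) : ℝ) = ((n : ℝ) * n - n) / 2 := by
  induction n with
  | zero => simp
  | succ n ih =>
    rw [Nat.choose_succ_succ]
    push_cast [Nat.choose_one_right, ih]
    ring

lemma count4 {r : ℕ} (a b c d : Fin r) (hab : a ≠ b) (hac : a ≠ c) (had : a ≠ d)
    (hbc : b ≠ c) (hbd : b ≠ d) (hcd : c ≠ d) :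
    ∑ T : Finset (Fin r), chi a T * chi b T * ((1 - chi c T) * (1 - chi d T))
      = 2 ^ (r - 4) := by
  classical
  set f : Fin r → ℝ := fun i => if i = c ∨ i = d then 0 else 1 with hf
  set g : Fin r → ℝ := fun i => if i = a ∨ i = b then 0 else 1 with hg
  have key : ∀ T : Finset (Fin r),
      chi a T * chi b T * ((1 - chi c T) * (1 - chi d T))
        = ∏ i, (if i ∈ T then f i else g i) := by
    intro T
    have hsub : ({a, b, c, d} : Finset (Fin r)) ⊆ Finset.univ := subset_univ _
    have hout : ∀ i ∈ Finset.univ, i ∉ ({a, b, c, d} : Finset (Fin r)) →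
        (if i ∈ T then f i else g i) = 1 := by
      intro i _ hi
      simp only [mem_insert, mem_singleton, not_or] at hi
      obtain ⟨h1, h2, h3, h4⟩ := hi
      simp [hf, hg, h1, h2, h3, h4]
    rw [← Finset.prod_subset hsub hout]
    have hQ : ({a, b, c, d} : Finset (Fin r))
        = insert a (insert b (insert c ({d} : Finset (Fin r)))) := rfl
    rw [hQ, Finset.prod_insert (by simp [hab, hac, had]),
      Finset.prod_insert (by simp [hbc, hbd]),
      Finset.prod_insert (by simp [hcd]), Finset.prod_singleton]
    have ha' : (if a ∈ T then f a else g a) = chi a T := by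
      simp [hf, hg, hac, had, chi]
    have hb' : (if b ∈ T then f b else g b) = chi b T := by
      simp [hf, hg, hbc, hbd, chi]
    have hc' : (if c ∈ T then f c else g c) = 1 - chi c T := by
      have h1 : f c = 0 := by simp [hf]
      have h2 : g c = 1 := by simp [hg, hac.symm, hbc.symm]
      rw [h1, h2, chi]; split_ifs <;> ring
    have hd' : (if d ∈ T then f d else g d) = 1 - chi d T := by
      have h1 : f d = 0 := by simp [hf]
      have h2 : g d = 1 := by simp [hg, had.symm, hbd.symm]
      rw [h1, h2, chi]; split_ifs <;> ring
    rw [ha', hb', hc', hd']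
    ring
  rw [Finset.sum_congr rfl fun T _ => key T, sum_prod_ite]
  have hfg : ∀ i : Fin r, f i + g i = if i ∈ ({a, b, c, d} : Finset (Fin r)) then 1 else 2 := by
    intro i
    by_cases h1 : i = a
    · subst h1; simp [hf, hg, hac, had]
    · by_cases h2 : i = b
      · subst h2; simp [hf, hg, hbc, hbd]
      · by_cases h3 : i = c
        · subst h3; simp [hf, hg, hac.symm, hbc.symm]
        · by_cases h4 : i = d
          · subst h4; simp [hf, hg, had.symm, hbd.symm]
          · norm_num [hf, hg, h1, h2, h3, h4]
  rw [Finset.prod_congr rfl fun i _ => hfg i, Finset.prod_ite, Finset.prod_const_one,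
    Finset.prod_const, one_mul]
  have hfilt : Finset.univ.filter (fun i => i ∉ ({a, b, c, d} : Finset (Fin r)))
      = ({a, b, c, d} : Finset (Fin r))ᶜ := by
    ext i; simp
  have hQcard : ({a, b, c, d} : Finset (Fin r)).card = 4 := by
    rw [Finset.card_insert_of_notMem (by simp [hab, hac, had]),
      Finset.card_insert_of_notMem (by simp [hbc, hbd]),
      Finset.card_insert_of_notMem (by simp [hcd]), Finset.card_singleton]
  rw [hfilt, Finset.card_compl, hQcard, Fintype.card_fin]

lemma chi_symmDiff_fst {r : ℕ} (p q : Fin r) (T : Finset (Fin r)) :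
    chi p (T ∆ ({p, q} : Finset (Fin r))) = 1 - chi p T := by
  have h : p ∈ T ∆ ({p, q} : Finset (Fin r)) ↔ p ∉ T := by
    simp [Finset.mem_symmDiff]
  unfold chi
  by_cases hp : p ∈ T <;> simp [h, hp]

lemma chi_symmDiff_snd {r : ℕ} (p q : Fin r) (T : Finset (Fin r)) :
    chi q (T ∆ ({p, q} : Finset (Fin r))) = 1 - chi q T := by
  have h : q ∈ T ∆ ({p, q} : Finset (Fin r)) ↔ q ∉ T := by
    simp [Finset.mem_symmDiff]
  unfold chi
  by_cases hp : q ∈ T <;> simp [h, hp]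

lemma chi_symmDiff_other {r : ℕ} (v p q : Fin r) (hvp : v ≠ p) (hvq : v ≠ q)
    (T : Finset (Fin r)) :
    chi v (T ∆ ({p, q} : Finset (Fin r))) = chi v T := by
  have h : v ∈ T ∆ ({p, q} : Finset (Fin r)) ↔ v ∈ T := by
    simp [Finset.mem_symmDiff, hvp, hvq]
  unfold chi
  rw [if_congr h rfl rfl]

lemma sum_flip_eq_zero {r : ℕ} (p q : Fin r) (hpq : p ≠ q) (F : Finset (Fin r) → ℝ)
    (hF : ∀ T, F (T ∆ ({p, q} : Finset (Fin r))) = -F T) :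
    ∑ T : Finset (Fin r), F T = 0 := by
  apply Finset.sum_ninvolution (fun T => T ∆ ({p, q} : Finset (Fin r)))
  · intro T; rw [hF]; ring
  · intro T _ hEq
    have h : p ∈ T ∆ ({p, q} : Finset (Fin r)) ↔ p ∉ T := by
      simp [Finset.mem_symmDiff]
    rw [hEq] at h
    tauto
  · intro T; exact Finset.mem_univ _
  · intro T; exact symmDiff_symmDiff_cancel_right _ _

lemma vanish_fst {r : ℕ} (w x y z v u : Fin r) (α β : ℝ) (hwx : w ≠ x)
    (hyw : y ≠ w) (hyx : y ≠ x) (hzw : z ≠ w) (hzx : z ≠ x)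
    (hvw : v ≠ w) (hvx : v ≠ x) (huw : u ≠ w) (hux : u ≠ x) :
    ∑ T : Finset (Fin r),
      (α * (chi v T * chi u T) + β * ((1 - chi v T) * (1 - chi u T)))
        * ((chi w T - chi x T) * (chi y T - chi z T)) = 0 := by
  apply sum_flip_eq_zero w x hwx
  intro T
  rw [chi_symmDiff_fst, chi_symmDiff_snd, chi_symmDiff_other v w x hvw hvx,
    chi_symmDiff_other u w x huw hux, chi_symmDiff_other y w x hyw hyx,
    chi_symmDiff_other z w x hzw hzx]
  ring

lemma vanish_snd {r : ℕ} (w x y z v u : Fin r) (α β : ℝ) (hyz : y ≠ z)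
    (hwy : w ≠ y) (hwz : w ≠ z) (hxy : x ≠ y) (hxz : x ≠ z)
    (hvy : v ≠ y) (hvz : v ≠ z) (huy : u ≠ y) (huz : u ≠ z) :
    ∑ T : Finset (Fin r),
      (α * (chi v T * chi u T) + β * ((1 - chi v T) * (1 - chi u T)))
        * ((chi w T - chi x T) * (chi y T - chi z T)) = 0 := by
  apply sum_flip_eq_zero y z hyz
  intro T
  rw [chi_symmDiff_fst, chi_symmDiff_snd, chi_symmDiff_other v y z hvy hvz,
    chi_symmDiff_other u y z huy huz, chi_symmDiff_other w y z hwy hwz,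
    chi_symmDiff_other x y z hxy hxz]
  ring

lemma cross_val {r : ℕ} (w x y z : Fin r) (α β : ℝ)
    (hwx : w ≠ x) (hwy : w ≠ y) (hwz : w ≠ z) (hxy : x ≠ y) (hxz : x ≠ z) (hyz : y ≠ z) :
    ∑ T : Finset (Fin r),
      (α * (chi w T * chi y T) + β * ((1 - chi w T) * (1 - chi y T)))
        * ((chi w T - chi x T) * (chi y T - chi z T)) = (α + β) * 2 ^ (r - 4) := by
  have key : ∀ T : Finset (Fin r),
      (α * (chi w T * chi y T) + β * ((1 - chi w T) * (1 - chi y T)))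
          * ((chi w T - chi x T) * (chi y T - chi z T))
        = α * (chi w T * chi y T * ((1 - chi x T) * (1 - chi z T)))
          + β * (chi x T * chi z T * ((1 - chi w T) * (1 - chi y T))) := by
    intro T
    unfold chi
    split_ifs <;> ring
  rw [Finset.sum_congr rfl fun T _ => key T, Finset.sum_add_distrib,
    ← Finset.mul_sum, ← Finset.mul_sum,
    count4 w y x z hwy hwx hwz hxy.symm hyz hxz,
    count4 x z w y hxz hwx.symm hxy hwz.symm hyz.symm hwy]
  ring

lemma card_inter_eq {r : ℕ} (S T : Finset (Fin r)) :
    (((S ∩ T).card : ℕ) : ℝ) = ∑ v, chi v S * chi v T := by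
  have h : ∀ v : Fin r, chi v S * chi v T = if v ∈ S ∩ T then (1 : ℝ) else 0 := by
    intro v
    unfold chi
    by_cases hS : v ∈ S <;> by_cases hT : v ∈ T <;> simp [hS, hT]
  rw [Finset.sum_congr rfl fun v _ => h v, Finset.sum_ite_mem, Finset.univ_inter,
    Finset.sum_const]
  simp

lemma card_compl_inter_eq {r : ℕ} (S T : Finset (Fin r)) :
    (((Sᶜ ∩ Tᶜ).card : ℕ) : ℝ) = ∑ v, (1 - chi v S) * (1 - chi v T) := by
  have h : ∀ v : Fin r, (1 - chi v S) * (1 - chi v T) = if v ∈ Sᶜ ∩ Tᶜ then (1 : ℝ) else 0 := by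
    intro v
    unfold chi
    by_cases hS : v ∈ S <;> by_cases hT : v ∈ T <;> simp [hS, hT]
  rw [Finset.sum_congr rfl fun v _ => h v, Finset.sum_ite_mem, Finset.univ_inter,
    Finset.sum_const]
  simp

lemma sq_sum {r : ℕ} (b : Fin r → ℝ) (hb : ∀ v, b v * b v = b v) :
    (∑ v, b v) * (∑ v, b v) - (∑ v, b v)
      = ∑ p ∈ Finset.univ.offDiag, b p.1 * b p.2 := by
  rw [Finset.sum_mul_sum, ← Finset.sum_product']
  have hsplit : (Finset.univ ×ˢ Finset.univ : Finset (Fin r × Fin r))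
      = Finset.univ.diag ∪ Finset.univ.offDiag := (Finset.diag_union_offDiag _).symm
  rw [hsplit, Finset.sum_union (Finset.disjoint_diag_offDiag _)]
  have himg : Finset.univ.diag = Finset.univ.image (fun v : Fin r => (v, v)) := by
    ext ⟨i, j⟩
    simp only [Finset.mem_diag, Finset.mem_image, Finset.mem_univ, true_and]
    constructor
    · rintro rfl; exact ⟨i, rfl⟩
    · rintro ⟨v, hv⟩; cases hv; rfl
  have hdiag : ∑ p ∈ Finset.univ.diag, b p.1 * b p.2 = ∑ v, b v := by
    rw [himg, Finset.sum_image (by intro a _ b _ h; simpa using congrArg Prod.fst h)]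
    exact Finset.sum_congr rfl fun v _ => hb v
  rw [hdiag]
  ring

lemma Mrep {r : ℕ} (S T : Finset (Fin r)) :
    Mmat r S T = (∑ p ∈ Finset.univ.offDiag,
      (chi p.1 S * chi p.2 S * (chi p.1 T * chi p.2 T)
        + (1 - chi p.1 S) * (1 - chi p.2 S) * ((1 - chi p.1 T) * (1 - chi p.2 T)))) / 2 := by
  have h1 := sq_sum (fun v => chi v S * chi v T)
    (fun v => by show chi v S * chi v T * (chi v S * chi v T) = chi v S * chi v T; unfold chi; split_ifs <;> ring)
  have h2 := sq_sum (fun v => (1 - chi v S) * (1 - chi v T))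
    (fun v => by show (1 - chi v S) * (1 - chi v T) * ((1 - chi v S) * (1 - chi v T)) = (1 - chi v S) * (1 - chi v T); unfold chi; split_ifs <;> ring)
  show ((((S ∩ T).card.choose 2 : ℕ) : ℝ)) + (((Sᶜ ∩ Tᶜ).card.choose 2 : ℕ) : ℝ) = _
  rw [choose2, choose2, card_inter_eq, card_compl_inter_eq, Finset.sum_add_distrib]
  rw [← add_div]
  congr 1
  rw [h1, h2]
  congr 1
  · exact Finset.sum_congr rfl fun p _ => by ring
  · exact Finset.sum_congr rfl fun p _ => by ring

/-- For `r ≥ 4` and four distinct `w, x, y, z ∈ [r]`, the vector `V` with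
`V_T = (1_T(w) − 1_T(x))·(1_T(y) − 1_T(z))` is an eigenvector of `M_r` with eigenvalue
`2^(r−3)`. -/
theorem familyF_eigenvector (r : ℕ) (hr : 4 ≤ r) (w x y z : Fin r)
    (hwx : w ≠ x) (hwy : w ≠ y) (hwz : w ≠ z) (hxy : x ≠ y) (hxz : x ≠ z) (hyz : y ≠ z)
    (V : Finset (Fin r) → ℝ)
    (hV : ∀ T : Finset (Fin r),
      V T = ((if w ∈ T then (1 : ℝ) else 0) - (if x ∈ T then (1 : ℝ) else 0))
          * ((if y ∈ T then (1 : ℝ) else 0) - (if z ∈ T then (1 : ℝ) else 0))) :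
    (Mmat r).mulVec V = ((2 : ℝ) ^ (r - 3)) • V ∧ V ≠ 0 := by
  have hxw := hwx.symm; have hyw := hwy.symm; have hzw := hwz.symm
  have hyx := hxy.symm; have hzx := hxz.symm; have hzy := hyz.symm
  have hV' : ∀ T, V T = (chi w T - chi x T) * (chi y T - chi z T) := fun T => hV T
  constructor
  · funext S
    simp only [Matrix.mulVec, dotProduct, Pi.smul_apply, smul_eq_mul]
    have step1 : ∑ T : Finset (Fin r), Mmat r S T * V T
        = (∑ p ∈ Finset.univ.offDiag, ∑ T : Finset (Fin r),
            (chi p.1 S * chi p.2 S * (chi p.1 T * chi p.2 T)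
              + (1 - chi p.1 S) * (1 - chi p.2 S) * ((1 - chi p.1 T) * (1 - chi p.2 T)))
              * ((chi w T - chi x T) * (chi y T - chi z T))) / 2 := by
      calc ∑ T : Finset (Fin r), Mmat r S T * V T
          = ∑ T : Finset (Fin r), (∑ p ∈ Finset.univ.offDiag,
              (chi p.1 S * chi p.2 S * (chi p.1 T * chi p.2 T)
                + (1 - chi p.1 S) * (1 - chi p.2 S) * ((1 - chi p.1 T) * (1 - chi p.2 T)))
                * ((chi w T - chi x T) * (chi y T - chi z T))) / 2 := by
            refine Finset.sum_congr rfl fun T _ => ?_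
            rw [Mrep, hV', div_mul_eq_mul_div, Finset.sum_mul]
        _ = (∑ T : Finset (Fin r), ∑ p ∈ Finset.univ.offDiag,
              (chi p.1 S * chi p.2 S * (chi p.1 T * chi p.2 T)
                + (1 - chi p.1 S) * (1 - chi p.2 S) * ((1 - chi p.1 T) * (1 - chi p.2 T)))
                * ((chi w T - chi x T) * (chi y T - chi z T))) / 2 := by
            rw [← Finset.sum_div]
        _ = _ := by rw [Finset.sum_comm]
    rw [step1]
    set E : Finset (Fin r × Fin r) :=
      insert (w,y) (insert (y,w) (insert (w,z) (insert (z,w)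
        (insert (x,y) (insert (y,x) (insert (x,z) {(z,x)})))))) with hE
    have hEsub : E ⊆ Finset.univ.offDiag := by
      intro p hp
      simp only [hE, Finset.mem_insert, Finset.mem_singleton] at hp
      rcases hp with rfl|rfl|rfl|rfl|rfl|rfl|rfl|rfl <;>
        simp [Finset.mem_offDiag, hwy, hyw, hwz, hzw, hxy, hyx, hxz, hzx]
    have hzero : ∀ p ∈ Finset.univ.offDiag, p ∉ E →
        (∑ T : Finset (Fin r),
          (chi p.1 S * chi p.2 S * (chi p.1 T * chi p.2 T)
            + (1 - chi p.1 S) * (1 - chi p.2 S) * ((1 - chi p.1 T) * (1 - chi p.2 T)))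
            * ((chi w T - chi x T) * (chi y T - chi z T))) = 0 := by
      rintro ⟨v, u⟩ hp hpE
      rw [Finset.mem_offDiag] at hp
      have hvu : v ≠ u := hp.2.2
      simp only [hE, Finset.mem_insert, Finset.mem_singleton, Prod.mk.injEq, not_or,
        not_and] at hpE
      obtain ⟨h1, h2, h3, h4, h5, h6, h7, h8⟩ := hpE
      have hcase : (v ≠ w ∧ v ≠ x ∧ u ≠ w ∧ u ≠ x) ∨ (v ≠ y ∧ v ≠ z ∧ u ≠ y ∧ u ≠ z) := by
        by_cases hvw : v = w
        · subst hvw; exact Or.inr ⟨hwy, hwz, h1 rfl, h3 rfl⟩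
        · by_cases hvx : v = x
          · subst hvx; exact Or.inr ⟨hxy, hxz, h5 rfl, h7 rfl⟩
          · by_cases huw : u = w
            · subst huw
              exact Or.inr ⟨fun h => h2 h rfl, fun h => h4 h rfl, hwy, hwz⟩
            · by_cases hux : u = x
              · subst hux
                exact Or.inr ⟨fun h => h6 h rfl, fun h => h8 h rfl, hxy, hxz⟩
              · exact Or.inl ⟨hvw, hvx, huw, hux⟩
      rcases hcase with ⟨a1, a2, a3, a4⟩ | ⟨a1, a2, a3, a4⟩
      · exact vanish_fst w x y z v u _ _ hwx hyw hyx hzw hzx a1 a2 a3 a4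
      · exact vanish_snd w x y z v u _ _ hyz hwy hwz hxy hxz a1 a2 a3 a4
    rw [← Finset.sum_subset hEsub hzero]
    have val_wy := cross_val w x y z (chi w S * chi y S) ((1 - chi w S) * (1 - chi y S))
      hwx hwy hwz hxy hxz hyz
    have val_yw : ∑ T : Finset (Fin r),
        (chi y S * chi w S * (chi y T * chi w T)
          + (1 - chi y S) * (1 - chi w S) * ((1 - chi y T) * (1 - chi w T)))
          * ((chi w T - chi x T) * (chi y T - chi z T))
        = (chi y S * chi w S + (1 - chi y S) * (1 - chi w S)) * 2 ^ (r - 4) := by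
      have h := cross_val y z w x (chi y S * chi w S) ((1 - chi y S) * (1 - chi w S))
        hyz hyw hyx hzw hzx hwx
      calc _ = ∑ T : Finset (Fin r),
            (chi y S * chi w S * (chi y T * chi w T)
              + (1 - chi y S) * (1 - chi w S) * ((1 - chi y T) * (1 - chi w T)))
              * ((chi y T - chi z T) * (chi w T - chi x T)) :=
          Finset.sum_congr rfl fun T _ => by ring
        _ = _ := h
    have val_wz : ∑ T : Finset (Fin r),
        (chi w S * chi z S * (chi w T * chi z T)
          + (1 - chi w S) * (1 - chi z S) * ((1 - chi w T) * (1 - chi z T)))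
          * ((chi w T - chi x T) * (chi y T - chi z T))
        = -((chi w S * chi z S + (1 - chi w S) * (1 - chi z S)) * 2 ^ (r - 4)) := by
      have h := cross_val w x z y (chi w S * chi z S) ((1 - chi w S) * (1 - chi z S))
        hwx hwz hwy hxz hxy hzy
      calc _ = ∑ T : Finset (Fin r),
            -((chi w S * chi z S * (chi w T * chi z T)
              + (1 - chi w S) * (1 - chi z S) * ((1 - chi w T) * (1 - chi z T)))
              * ((chi w T - chi x T) * (chi z T - chi y T))) :=
          Finset.sum_congr rfl fun T _ => by ring
        _ = -∑ T : Finset (Fin r),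
            ((chi w S * chi z S * (chi w T * chi z T)
              + (1 - chi w S) * (1 - chi z S) * ((1 - chi w T) * (1 - chi z T)))
              * ((chi w T - chi x T) * (chi z T - chi y T))) := Finset.sum_neg_distrib _
        _ = _ := by rw [h]
    have val_zw : ∑ T : Finset (Fin r),
        (chi z S * chi w S * (chi z T * chi w T)
          + (1 - chi z S) * (1 - chi w S) * ((1 - chi z T) * (1 - chi w T)))
          * ((chi w T - chi x T) * (chi y T - chi z T))
        = -((chi z S * chi w S + (1 - chi z S) * (1 - chi w S)) * 2 ^ (r - 4)) := by
      have h := cross_val z y w x (chi z S * chi w S) ((1 - chi z S) * (1 - chi w S))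
        hzy hzw hzx hyw hyx hwx
      calc _ = ∑ T : Finset (Fin r),
            -((chi z S * chi w S * (chi z T * chi w T)
              + (1 - chi z S) * (1 - chi w S) * ((1 - chi z T) * (1 - chi w T)))
              * ((chi z T - chi y T) * (chi w T - chi x T))) :=
          Finset.sum_congr rfl fun T _ => by ring
        _ = -∑ T : Finset (Fin r),
            ((chi z S * chi w S * (chi z T * chi w T)
              + (1 - chi z S) * (1 - chi w S) * ((1 - chi z T) * (1 - chi w T)))
              * ((chi z T - chi y T) * (chi w T - chi x T))) := Finset.sum_neg_distrib _
        _ = _ := by rw [h]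
    have val_xy : ∑ T : Finset (Fin r),
        (chi x S * chi y S * (chi x T * chi y T)
          + (1 - chi x S) * (1 - chi y S) * ((1 - chi x T) * (1 - chi y T)))
          * ((chi w T - chi x T) * (chi y T - chi z T))
        = -((chi x S * chi y S + (1 - chi x S) * (1 - chi y S)) * 2 ^ (r - 4)) := by
      have h := cross_val x w y z (chi x S * chi y S) ((1 - chi x S) * (1 - chi y S))
        hxw hxy hxz hwy hwz hyz
      calc _ = ∑ T : Finset (Fin r),
            -((chi x S * chi y S * (chi x T * chi y T)
              + (1 - chi x S) * (1 - chi y S) * ((1 - chi x T) * (1 - chi y T)))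
              * ((chi x T - chi w T) * (chi y T - chi z T))) :=
          Finset.sum_congr rfl fun T _ => by ring
        _ = -∑ T : Finset (Fin r),
            ((chi x S * chi y S * (chi x T * chi y T)
              + (1 - chi x S) * (1 - chi y S) * ((1 - chi x T) * (1 - chi y T)))
              * ((chi x T - chi w T) * (chi y T - chi z T))) := Finset.sum_neg_distrib _
        _ = _ := by rw [h]
    have val_yx : ∑ T : Finset (Fin r),
        (chi y S * chi x S * (chi y T * chi x T)
          + (1 - chi y S) * (1 - chi x S) * ((1 - chi y T) * (1 - chi x T)))
          * ((chi w T - chi x T) * (chi y T - chi z T))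
        = -((chi y S * chi x S + (1 - chi y S) * (1 - chi x S)) * 2 ^ (r - 4)) := by
      have h := cross_val y z x w (chi y S * chi x S) ((1 - chi y S) * (1 - chi x S))
        hyz hyx hyw hzx hzw hxw
      calc _ = ∑ T : Finset (Fin r),
            -((chi y S * chi x S * (chi y T * chi x T)
              + (1 - chi y S) * (1 - chi x S) * ((1 - chi y T) * (1 - chi x T)))
              * ((chi y T - chi z T) * (chi x T - chi w T))) :=
          Finset.sum_congr rfl fun T _ => by ring
        _ = -∑ T : Finset (Fin r),
            ((chi y S * chi x S * (chi y T * chi x T)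
              + (1 - chi y S) * (1 - chi x S) * ((1 - chi y T) * (1 - chi x T)))
              * ((chi y T - chi z T) * (chi x T - chi w T))) := Finset.sum_neg_distrib _
        _ = _ := by rw [h]
    have val_xz : ∑ T : Finset (Fin r),
        (chi x S * chi z S * (chi x T * chi z T)
          + (1 - chi x S) * (1 - chi z S) * ((1 - chi x T) * (1 - chi z T)))
          * ((chi w T - chi x T) * (chi y T - chi z T))
        = (chi x S * chi z S + (1 - chi x S) * (1 - chi z S)) * 2 ^ (r - 4) := by
      have h := cross_val x w z y (chi x S * chi z S) ((1 - chi x S) * (1 - chi z S))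
        hxw hxz hxy hwz hwy hzy
      calc _ = ∑ T : Finset (Fin r),
            ((chi x S * chi z S * (chi x T * chi z T)
              + (1 - chi x S) * (1 - chi z S) * ((1 - chi x T) * (1 - chi z T)))
              * ((chi x T - chi w T) * (chi z T - chi y T))) :=
          Finset.sum_congr rfl fun T _ => by ring
        _ = _ := h
    have val_zx : ∑ T : Finset (Fin r),
        (chi z S * chi x S * (chi z T * chi x T)
          + (1 - chi z S) * (1 - chi x S) * ((1 - chi z T) * (1 - chi x T)))
          * ((chi w T - chi x T) * (chi y T - chi z T))
        = (chi z S * chi x S + (1 - chi z S) * (1 - chi x S)) * 2 ^ (r - 4) := by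
      have h := cross_val z y x w (chi z S * chi x S) ((1 - chi z S) * (1 - chi x S))
        hzy hzx hzw hyx hyw hxw
      calc _ = ∑ T : Finset (Fin r),
            ((chi z S * chi x S * (chi z T * chi x T)
              + (1 - chi z S) * (1 - chi x S) * ((1 - chi z T) * (1 - chi x T)))
              * ((chi z T - chi y T) * (chi x T - chi w T))) :=
          Finset.sum_congr rfl fun T _ => by ring
        _ = _ := h
    rw [hE, Finset.sum_insert (by
        simp [Prod.ext_iff, hwx, hwy, hwz, hxy, hxz, hyz, hxw, hyw, hzw, hyx, hzx, hzy]),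
      Finset.sum_insert (by
        simp [Prod.ext_iff, hwx, hwy, hwz, hxy, hxz, hyz, hxw, hyw, hzw, hyx, hzx, hzy]),
      Finset.sum_insert (by
        simp [Prod.ext_iff, hwx, hwy, hwz, hxy, hxz, hyz, hxw, hyw, hzw, hyx, hzx, hzy]),
      Finset.sum_insert (by
        simp [Prod.ext_iff, hwx, hwy, hwz, hxy, hxz, hyz, hxw, hyw, hzw, hyx, hzx, hzy]),
      Finset.sum_insert (by
        simp [Prod.ext_iff, hwx, hwy, hwz, hxy, hxz, hyz, hxw, hyw, hzw, hyx, hzx, hzy]),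
      Finset.sum_insert (by
        simp [Prod.ext_iff, hwx, hwy, hwz, hxy, hxz, hyz, hxw, hyw, hzw, hyx, hzx, hzy]),
      Finset.sum_insert (by
        simp [Prod.ext_iff, hwx, hwy, hwz, hxy, hxz, hyz, hxw, hyw, hzw, hyx, hzx, hzy]),
      Finset.sum_singleton]
    rw [val_wy, val_yw, val_wz, val_zw, val_xy, val_yx, val_xz, val_zx, hV' S]
    have hpow : (2 : ℝ) ^ (r - 3) = 2 ^ (r - 4) * 2 := by
      rw [← pow_succ]
      congr 1
      omega
    rw [hpow]
    unfold chi
    split_ifs <;> ring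
  · intro h0
    have h1 : V ({w, y} : Finset (Fin r)) = 0 := by rw [h0]; rfl
    rw [hV] at h1
    simp [hxw, hxy, hzw, hzy, hwy] at h1
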